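/- arXiv:1804.05041 — 2 statements merged into one kernel-verified Lean document; each statement's English description precedes it below -/
import Mathlib

section
/- For all natural numbers k and s with k ≥ s ≥ 2, every k-surviving Turing degree is also s-surviving: if A : ℕ → ℕ is such that some k-surviving function is computable relative to A, then some s-surviving function is computable relative to A. -/
/-! Basic notions: subtrees of `X^{<ω}`, `k`-branching trees, `k`-trees, paths,
computable trees, relative computability (oracle machines), surviving functions,
and computable traceability. -/

/-- A subtree of `X^{<ω}`: a set of finite strings closed under initial segments. -/
def IsSubtree {X : Type*} (T : Set (List X)) : Prop :=
  ∀ σ ∈ T, ∀ τ : List X, τ <+: σ → τ ∈ T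

/-- The set of immediate successors of the node `σ` in the tree `T`. -/
def succSet {X : Type*} (T : Set (List X)) (σ : List X) : Set X :=
  {x | σ ++ [x] ∈ T}

/-- A `k`-branching tree: a subtree in which every node has either exactly `1`
or exactly `k` immediate successors. -/
def IsBranchingTree {X : Type*} (k : ℕ) (T : Set (List X)) : Prop :=
  IsSubtree T ∧ ∀ σ ∈ T, (succSet T σ).ncard = 1 ∨ (succSet T σ).ncard = k

/-- A `k`-tree: a subtree in which every node has at least `1` and at most `k`
immediate successors. -/
def IsKTree {X : Type*} (k : ℕ) (T : Set (List X)) : Prop :=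
  IsSubtree T ∧ ∀ σ ∈ T, 1 ≤ (succSet T σ).ncard ∧ (succSet T σ).ncard ≤ k

/-- `f` is a path through `T`: every finite initial segment of `f` belongs to `T`. -/
def IsPathThrough {X : Type*} (f : ℕ → X) (T : Set (List X)) : Prop :=
  ∀ n : ℕ, (List.range n).map f ∈ T

/-- A tree is computable when membership is decidable by an algorithm. -/
def ComputableTree {X : Type*} [Primcodable X] (T : Set (List X)) : Prop :=
  ComputablePred (· ∈ T)

/-- Partial functions `ℕ →. ℕ` which are partial recursive relative to the oracle `O`
(the relativization of `Nat.Partrec`). -/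
inductive RecursiveIn' (O : ℕ → ℕ) : (ℕ →. ℕ) → Prop
  | oracle : RecursiveIn' O (fun n => Part.some (O n))
  | zero : RecursiveIn' O (pure 0)
  | succ : RecursiveIn' O ↑Nat.succ
  | left : RecursiveIn' O ↑fun n : ℕ => n.unpair.1
  | right : RecursiveIn' O ↑fun n : ℕ => n.unpair.2
  | pair {f g} : RecursiveIn' O f → RecursiveIn' O g →
      RecursiveIn' O fun n => Nat.pair <$> f n <*> g n
  | comp {f g} : RecursiveIn' O f → RecursiveIn' O g →
      RecursiveIn' O fun n => g n >>= f
  | prec {f g} : RecursiveIn' O f → RecursiveIn' O g →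
      RecursiveIn' O (Nat.unpaired fun a n =>
        n.rec (f a) fun y IH => do let i ← IH; g (Nat.pair a (Nat.pair y i)))
  | rfind {f} : RecursiveIn' O f →
      RecursiveIn' O fun a => Nat.rfind fun n => (fun m => m = 0) <$> f (Nat.pair a n)

/-- A total function between `Primcodable` types is computable relative to the oracle `O`. -/
def ComputableIn' (O : ℕ → ℕ) {α σ : Type*} [Primcodable α] [Primcodable σ] (f : α → σ) : Prop :=
  RecursiveIn' O fun n =>
    Part.bind ((Encodable.decode (α := α) n) : Part α) fun a =>
      Part.some (Encodable.encode (f a))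

/-- For `k ≥ 2`, `f : ℕ → Fin (k+1)` is `k`-surviving if it is not a path through any
computable `k`-branching subtree of `(k+1)^{<ω}`. -/
def KSurviving (k : ℕ) (f : ℕ → Fin (k + 1)) : Prop :=
  ∀ T : Set (List (Fin (k + 1))),
    IsBranchingTree k T → ComputableTree T → ¬ IsPathThrough f T

/-- The degree of the oracle `O` is computably traceable: there is a computable bound `h`
such that every total `f : ℕ → ℕ` computable in `O` admits a computable trace. -/
def ComputablyTraceableDeg (O : ℕ → ℕ) : Prop :=
  ∃ h : ℕ → ℕ, Computable h ∧
    ∀ f : ℕ → ℕ, ComputableIn' O f →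
      ∃ S : ℕ → Finset ℕ,
        (∃ L : ℕ → List ℕ, Computable L ∧ ∀ n, (L n).toFinset = S n) ∧
        ∀ n, (S n).card ≤ h n ∧ f n ∈ S n

namespace KSurvAux


/-- Residue map `Fin (k+1) → Fin (s+1)`. -/
def res (k s : ℕ) (x : Fin (k + 1)) : Fin (s + 1) :=
  ⟨x.val % (s + 1), Nat.mod_lt _ (Nat.succ_pos s)⟩

def encL (k s : ℕ) (τ : List (Fin (k + 1))) : List (Fin (s + 1)) :=
  τ.map (res k s)

def Rl (k s : ℕ) (χ : List (Fin (s + 1)) → Bool) (τ : List (Fin (k + 1))) :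
    Finset (Fin (k + 1)) :=
  Finset.univ.filter (fun y => χ (encL k s τ ++ [res k s y]) = true)

noncomputable def padF (k : ℕ) (r : Finset (Fin (k + 1))) : Finset (Fin (k + 1)) :=
  if r.card = 0 then {0}
  else if r.card = 1 then ∅
  else ((rᶜ).toList.take (k - r.card)).toFinset

noncomputable def succF (k s : ℕ) (χ : List (Fin (s + 1)) → Bool) (τ : List (Fin (k + 1))) :
    Finset (Fin (k + 1)) :=
  if χ (encL k s τ) = true then Rl k s χ τ ∪ padF k (Rl k s χ τ) else {0}

def Tk (k s : ℕ) (χ : List (Fin (s + 1)) → Bool) : Set (List (Fin (k + 1))) :=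
  {σ | ∀ i, (hi : i < σ.length) → σ[i] ∈ succF k s χ (σ.take i)}

theorem padF_disjoint (k : ℕ) (r : Finset (Fin (k + 1))) : Disjoint r (padF k r) := by
  unfold padF
  split_ifs with h0 h1
  · have : r = ∅ := Finset.card_eq_zero.mp h0
    simp [this]
  · simp
  · refine Disjoint.mono_right ?_ (disjoint_compl_right : Disjoint r rᶜ)
    intro x hx
    have hx' : x ∈ (rᶜ).toList := List.mem_of_mem_take (List.mem_toFinset.mp hx)
    exact Finset.mem_toList.mp hx'

theorem padF_card (k : ℕ) (r : Finset (Fin (k + 1))) (h2 : 2 ≤ r.card) (hk : r.card ≤ k) :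
    (padF k r).card = k - r.card := by
  unfold padF
  rw [if_neg (by omega), if_neg (by omega)]
  have hnd : ((rᶜ).toList.take (k - r.card)).Nodup :=
    (Finset.nodup_toList _).sublist (List.take_sublist _ _)
  rw [List.toFinset_card_of_nodup hnd, List.length_take, Finset.length_toList,
    Finset.card_compl]
  simp only [Fintype.card_fin]
  omega

theorem succF_card (k s : ℕ) (hs : 2 ≤ s) (hsk : s ≤ k)
    (T : Set (List (Fin (s + 1)))) (hT : IsBranchingTree s T)
    (χ : List (Fin (s + 1)) → Bool) (hχ : ∀ τ, τ ∈ T ↔ χ τ = true)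
    (τ : List (Fin (k + 1))) :
    (succF k s χ τ).card = 1 ∨ (succF k s χ τ).card = k := by
  unfold succF
  split_ifs with hmem
  · -- the real case
    have hrk : (Rl k s χ τ).card ≤ k := by
      by_contra hgt
      push_neg at hgt
      have hcard : (Rl k s χ τ).card = Fintype.card (Fin (k + 1)) := by
        have := Finset.card_le_univ (Rl k s χ τ)
        simp only [Fintype.card_fin] at *
        omega
      have huniv : Rl k s χ τ = Finset.univ := Finset.eq_univ_of_card _ hcard
      have hsucc : succSet T (encL k s τ) = Set.univ := by
        apply Set.eq_univ_of_forall
        intro z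
        have hz : (z : ℕ) < k + 1 := lt_of_le_of_lt (Nat.le_of_lt_succ z.isLt) (by omega)
        set y : Fin (k + 1) := ⟨z.val, hz⟩ with hy
        have hyR : y ∈ Rl k s χ τ := huniv ▸ Finset.mem_univ y
        have hres : res k s y = z := by
          apply Fin.ext
          simp [res, hy, Nat.mod_eq_of_lt z.isLt]
        have := (Finset.mem_filter.mp hyR).2
        rw [hres] at this
        exact (hχ _).mpr this
      have hTmem : encL k s τ ∈ T := (hχ _).mpr hmem
      have := hT.2 _ hTmem
      rw [hsucc, Set.ncard_univ, Nat.card_eq_fintype_card, Fintype.card_fin] at this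
      omega
    rcases Nat.lt_or_ge (Rl k s χ τ).card 2 with hlt | hge
    · -- card 0 or 1
      interval_cases h : (Rl k s χ τ).card
      · have : Rl k s χ τ = ∅ := Finset.card_eq_zero.mp h
        left
        rw [this]
        simp [padF]
      · left
        rw [Finset.card_union_of_disjoint (padF_disjoint k _)]
        rw [padF, if_neg (by omega), if_pos h, h]
        simp
    · right
      rw [Finset.card_union_of_disjoint (padF_disjoint k _), padF_card k _ hge hrk]
      omega
  · left; simp

theorem mem_concat (k s : ℕ) (χ : List (Fin (s + 1)) → Bool)
    (σ : List (Fin (k + 1))) (x : Fin (k + 1)) :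
    σ ++ [x] ∈ Tk k s χ ↔ σ ∈ Tk k s χ ∧ x ∈ succF k s χ σ := by
  constructor
  · intro h
    refine ⟨fun i hi => ?_, ?_⟩
    · have hi' : i < (σ ++ [x]).length := by simp; omega
      have := h i hi'
      rwa [List.getElem_append_left hi, List.take_append_of_le_length (le_of_lt hi)] at this
    · have hlen : σ.length < (σ ++ [x]).length := by simp
      have := h σ.length hlen
      rw [List.take_append_of_le_length le_rfl, List.take_length,
        List.getElem_concat_length (l := σ) (a := x) (i := σ.length) rfl hlen] at this
      exact this
  · rintro ⟨h1, h2⟩ i hi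
    simp only [List.length_append, List.length_singleton] at hi
    rcases Nat.lt_or_ge i σ.length with hlt | hge
    · rw [List.getElem_append_left hlt, List.take_append_of_le_length (le_of_lt hlt)]
      exact h1 i hlt
    · have hieq : i = σ.length := by omega
      subst hieq
      rw [List.take_append_of_le_length le_rfl, List.take_length,
        List.getElem_concat_length (l := σ) (a := x) (i := σ.length) rfl (by simp)]
      exact h2

theorem Tk_subtree (k s : ℕ) (χ : List (Fin (s + 1)) → Bool) : IsSubtree (Tk k s χ) := by
  intro σ hσ τ hpre
  obtain ⟨t, rfl⟩ := hpre
  intro i hi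
  have hi' : i < (τ ++ t).length := by simp; omega
  have := hσ i hi'
  rwa [List.getElem_append_left hi, List.take_append_of_le_length (le_of_lt hi)] at this

theorem succSet_Tk (k s : ℕ) (χ : List (Fin (s + 1)) → Bool) (σ : List (Fin (k + 1)))
    (hσ : σ ∈ Tk k s χ) : succSet (Tk k s χ) σ = ↑(succF k s χ σ) := by
  ext x
  simp only [succSet, Set.mem_setOf_eq, Finset.coe_sort_coe, Finset.mem_coe]
  rw [mem_concat]
  exact ⟨fun h => h.2, fun h => ⟨hσ, h⟩⟩

theorem Tk_branching (k s : ℕ) (hs : 2 ≤ s) (hsk : s ≤ k)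
    (T : Set (List (Fin (s + 1)))) (hT : IsBranchingTree s T)
    (χ : List (Fin (s + 1)) → Bool) (hχ : ∀ τ, τ ∈ T ↔ χ τ = true) :
    IsBranchingTree k (Tk k s χ) := by
  refine ⟨Tk_subtree k s χ, fun σ hσ => ?_⟩
  rw [succSet_Tk k s χ σ hσ, Set.ncard_coe_finset]
  exact succF_card k s hs hsk T hT χ hχ σ

end KSurvAux
namespace KSurvAux

/-- The local data extracted from `χ` at a node. -/
def dataF (k s : ℕ) (χ : List (Fin (s + 1)) → Bool) (τ : List (Fin (k + 1))) :
    Bool × List.Vector Bool (k + 1) :=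
  (χ (encL k s τ), List.Vector.ofFn fun y => χ (encL k s τ ++ [res k s y]))

/-- The one-step condition, as a function of finite data. -/
noncomputable def stepF (k : ℕ) (p : (Bool × List.Vector Bool (k + 1)) × Fin (k + 1)) :
    Bool :=
  decide (p.2 ∈ (if p.1.1 = true then
    (Finset.univ.filter (fun y => p.1.2.get y = true)) ∪
      padF k (Finset.univ.filter (fun y => p.1.2.get y = true)) else {0}))

theorem stepF_eq (k s : ℕ) (χ : List (Fin (s + 1)) → Bool) (τ : List (Fin (k + 1)))
    (x : Fin (k + 1)) :
    stepF k (dataF k s χ τ, x) = decide (x ∈ succF k s χ τ) := by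
  have hr : (Finset.univ.filter (fun y => (dataF k s χ τ).2.get y = true)) = Rl k s χ τ := by
    apply Finset.filter_congr
    intro y _
    simp [dataF, Rl, List.Vector.get_ofFn]
  show decide (x ∈ (if (dataF k s χ τ).1 = true then
      (Finset.univ.filter (fun y => (dataF k s χ τ).2.get y = true)) ∪
        padF k (Finset.univ.filter (fun y => (dataF k s χ τ).2.get y = true)) else {0}))
      = decide (x ∈ succF k s χ τ)
  rw [hr]
  rfl

/-- The option-valued one-step condition along a string. -/
noncomputable def coptF (k s : ℕ) (χ : List (Fin (s + 1)) → Bool)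
    (σ : List (Fin (k + 1))) (i : ℕ) : Bool :=
  Option.casesOn σ[i]? true (fun x => stepF k (dataF k s χ (σ.take i), x))

/-- Membership up to level `n`. -/
noncomputable def memF (k s : ℕ) (χ : List (Fin (s + 1)) → Bool)
    (σ : List (Fin (k + 1))) (n : ℕ) : Bool :=
  (List.range n).all (coptF k s χ σ)

theorem mem_Tk_iff (k s : ℕ) (χ : List (Fin (s + 1)) → Bool) (σ : List (Fin (k + 1))) :
    σ ∈ Tk k s χ ↔ memF k s χ σ σ.length = true := by
  rw [memF, List.all_eq_true]
  constructor
  · intro h i hi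
    rw [List.mem_range] at hi
    rw [coptF, List.getElem?_eq_getElem hi]
    simpa [stepF_eq] using h i hi
  · intro h i hi
    have := h i (List.mem_range.mpr hi)
    rw [coptF, List.getElem?_eq_getElem hi] at this
    simpa [stepF_eq] using this

theorem computable_take {α : Type*} [Primcodable α] [Inhabited α] :
    Computable₂ (fun (l : List α) (n : ℕ) => l.take n) := by
  have h1 : Primrec₂ (fun (l : List α) (n : ℕ) => l.take n) := by
    have hr : Primrec fun p : List α × ℕ =>
        List.range (min p.2 p.1.length) :=
      Primrec.list_range.comp (Primrec.nat_min.comp Primrec.snd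
        (Primrec.list_length.comp Primrec.fst))
    have hg : Primrec₂ fun (p : List α × ℕ) (i : ℕ) => p.1.getD i default :=
      (Primrec.list_getD default).comp (Primrec.fst.comp Primrec.fst) Primrec.snd
    have := Primrec.list_map hr hg
    refine this.of_eq ?_
    rintro ⟨l, n⟩
    apply List.ext_getElem
    · simp [Nat.min_comm]
    · intro i h1i h2i
      have hi' : i < l.length := by
        simp only [List.length_map, List.length_range, lt_min_iff] at h1i
        exact h1i.2
      simp only [List.getElem_map, List.getElem_range, List.getElem_take]
      exact List.getD_eq_getElem l default hi'
  exact h1.to_comp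

theorem computable_memF (k s : ℕ) (χ : List (Fin (s + 1)) → Bool) (hχ : Computable χ) :
    Computable fun σ => memF k s χ σ σ.length := by
  have hres : Primrec (res k s) := Primrec.dom_finite _
  have henc : Computable (encL k s) := by
    have : Primrec (encL k s) :=
      Primrec.list_map Primrec.id ((hres.comp Primrec.snd).to₂ :
        Primrec₂ fun (_ : List (Fin (k+1))) x => res k s x)
    exact this.to_comp
  have hdata : Computable (dataF k s χ) := by
    refine Computable.pair (hχ.comp henc) (Computable.vector_ofFn fun y => ?_)
    exact hχ.comp (Computable.list_concat.comp henc (Computable.const (res k s y)))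
  have hstep : Primrec (stepF k) := Primrec.dom_finite _
  have hcopt : Computable₂ (coptF k s χ) := by
    have hget : Computable fun (p : List (Fin (k + 1)) × ℕ) => p.1[p.2]? :=
      Computable.list_getElem?.comp Computable.fst Computable.snd
    have hg : Computable₂ (fun (p : List (Fin (k+1)) × ℕ) (x : Fin (k+1)) =>
        stepF k (dataF k s χ (p.1.take p.2), x)) :=
      Computable₂.mk (hstep.to_comp.comp
        ((hdata.comp (computable_take.comp (Computable.fst.comp Computable.fst)
          (Computable.snd.comp Computable.fst))).pair Computable.snd))
    exact Computable₂.mk (Computable.option_casesOn hget (Computable.const true) hg)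
  have hmem : Computable₂ (memF k s χ) := by
    apply Computable.nat_strong_rec (memF k s χ)
      (g := fun σ (l : List Bool) =>
        some (bif decide (l.length = 0) then true
          else bif (l[l.length - 1]?).getD true then coptF k s χ σ (l.length - 1)
          else false))
    · refine Computable₂.mk (Computable.option_some.comp ?_)
      have hpred : Computable fun p : List (Fin (k+1)) × List Bool => p.2.length - 1 :=
        (Primrec.nat_sub.comp (Primrec.list_length.comp Primrec.snd)
          (Primrec.const 1)).to_comp
      have hlast : Computable fun p : List (Fin (k+1)) × List Bool =>
          (p.2[p.2.length - 1]?).getD true :=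
        Computable.option_getD (Computable.list_getElem?.comp Computable.snd hpred)
          (Computable.const true)
      have hempty : Computable fun p : List (Fin (k+1)) × List Bool =>
          decide (p.2.length = 0) :=
        (Primrec.eq.comp (Primrec.list_length.comp Primrec.snd) (Primrec.const 0)).decide.to_comp
      exact Computable.cond hempty (Computable.const true)
        (Computable.cond hlast (hcopt.comp Computable.fst hpred) (Computable.const false))
    · intro σ n
      cases n with
      | zero => simp [memF]
      | succ m =>
        have hlen : ((List.range (m+1)).map (memF k s χ σ)).length = m + 1 := by simp
        have hget : ((List.range (m+1)).map (memF k s χ σ))[m]? =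
            some (memF k s χ σ m) := by
          rw [List.getElem?_eq_getElem (by simp)]
          simp
        simp only [hlen, Nat.add_sub_cancel, hget, Option.getD_some]
        rw [show decide (m + 1 = 0) = false by simp, cond_false]
        have hsplit : memF k s χ σ (m + 1) = (memF k s χ σ m && coptF k s χ σ m) := by
          rw [memF, memF, List.range_succ, List.all_append]
          simp
        rw [hsplit]
        cases memF k s χ σ m <;> simp
  exact hmem.comp Computable.id Computable.list_length

theorem computable_Tk (k s : ℕ) (χ : List (Fin (s + 1)) → Bool) (hχ : Computable χ) :
    ComputableTree (Tk k s χ) := by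
  rw [ComputableTree, ComputablePred.computable_iff]
  exact ⟨fun σ => memF k s χ σ σ.length, computable_memF k s χ hχ,
    funext fun σ => propext (mem_Tk_iff k s χ σ)⟩

end KSurvAux
namespace KSurvAux

theorem path_Tk (k s : ℕ) (T : Set (List (Fin (s + 1))))
    (χ : List (Fin (s + 1)) → Bool) (hχ : ∀ τ, τ ∈ T ↔ χ τ = true)
    (f : ℕ → Fin (k + 1)) (hp : IsPathThrough (fun n => res k s (f n)) T) :
    IsPathThrough f (Tk k s χ) := by
  intro n i hi
  have hlen : ((List.range n).map f).length = n := by simp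
  rw [hlen] at hi
  have hget : ((List.range n).map f)[i]'(by simpa using hi) = f i := by
    simp
  have htake : ((List.range n).map f).take i = (List.range i).map f := by
    rw [← List.map_take, List.take_range, Nat.min_eq_left (le_of_lt hi)]
  rw [hget, htake]
  have henc : ∀ j, encL k s ((List.range j).map f) =
      (List.range j).map (fun n => res k s (f n)) := by
    intro j
    rw [encL, List.map_map]
    rfl
  have h1 : χ (encL k s ((List.range i).map f)) = true := by
    rw [henc]
    exact (hχ _).mp (hp i)
  rw [succF, if_pos h1]
  apply Finset.mem_union_left
  rw [Rl, Finset.mem_filter]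
  refine ⟨Finset.mem_univ _, ?_⟩
  apply (hχ _).mp
  rw [henc]
  have := hp (i + 1)
  rwa [List.range_succ, List.map_append] at this

theorem recursiveIn_of_partrec {O : ℕ → ℕ} {f : ℕ →. ℕ} (h : Nat.Partrec f) :
    RecursiveIn' O f := by
  induction h with
  | zero => exact RecursiveIn'.zero
  | succ => exact RecursiveIn'.succ
  | left => exact RecursiveIn'.left
  | right => exact RecursiveIn'.right
  | pair _ _ ih1 ih2 => exact RecursiveIn'.pair ih1 ih2
  | comp _ _ ih1 ih2 => exact RecursiveIn'.comp ih1 ih2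
  | prec _ _ ih1 ih2 => exact RecursiveIn'.prec ih1 ih2
  | rfind _ ih => exact RecursiveIn'.rfind ih

end KSurvAux

/-- For all `k ≥ s ≥ 2`, every `k`-surviving degree is `s`-surviving. -/
theorem kSurviving_degree_is_sSurviving (k s : ℕ) (hs : 2 ≤ s) (hsk : s ≤ k)
    (A : ℕ → ℕ) (h : ∃ f : ℕ → Fin (k + 1), ComputableIn' A f ∧ KSurviving k f) :
    ∃ g : ℕ → Fin (s + 1), ComputableIn' A g ∧ KSurviving s g := by
  obtain ⟨f, hfc, hfs⟩ := h
  refine ⟨fun n => KSurvAux.res k s (f n), ?_, ?_⟩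
  · -- computability in `A`
    have hcomp : Computable (fun v : ℕ => v % (s + 1)) :=
      (Primrec.nat_mod.comp Primrec.id (Primrec.const (s + 1))).to_comp
    set M : ℕ →. ℕ := fun v => Part.some (v % (s + 1)) with hM
    have hmod : Nat.Partrec M := Partrec.nat_iff.mp hcomp
    unfold ComputableIn' at hfc ⊢
    have h2 := RecursiveIn'.comp (KSurvAux.recursiveIn_of_partrec hmod) hfc
    have heq : (fun n => (Part.bind ((Encodable.decode (α := ℕ) n : Option ℕ) : Part ℕ)
          fun a => Part.some (Encodable.encode (f a))) >>= M)
        = fun n => Part.bind ((Encodable.decode (α := ℕ) n : Option ℕ) : Part ℕ)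
          fun a => Part.some (Encodable.encode (KSurvAux.res k s (f a))) := by
      funext n
      rw [show (Encodable.decode (α := ℕ) n : Option ℕ) = some n from rfl]
      rw [Part.coe_some, Part.bind_some]
      show Part.bind (Part.some (Encodable.encode (f n))) M = _
      rw [Part.bind_some, Part.bind_some]
      rfl
    exact heq ▸ h2
  · -- s-surviving
    intro T hT hTc hpath
    obtain ⟨χ, hχc, hχe⟩ := ComputablePred.computable_iff.mp hTc
    have hχ : ∀ τ, τ ∈ T ↔ χ τ = true := fun τ => iff_of_eq (congrFun hχe τ)
    exact hfs (KSurvAux.Tk k s χ)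
      (KSurvAux.Tk_branching k s hs hsk T hT χ hχ)
      (KSurvAux.computable_Tk k s χ hχc)
      (KSurvAux.path_Tk k s T χ hχ f hpath)
end

section
/- Every hyperimmune degree is k-surviving for every k ≥ 2: if A : ℕ → ℕ is such that some function g : ℕ → ℕ computable relative to A is not dominated by any computable function (i.e., for every computable h : ℕ → ℕ there exist infinitely many n with g(n) > h(n)), then for every k ≥ 2 there is a k-surviving function computable relative to A. -/
theorem RecursiveIn'.of_eq {O : ℕ → ℕ} {f g : ℕ →. ℕ} (hf : RecursiveIn' O f)
    (H : ∀ n, f n = g n) : RecursiveIn' O g := (funext H : f = g) ▸ hf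

theorem RecursiveIn'.of_partrec {O : ℕ → ℕ} {f : ℕ →. ℕ} (hf : Nat.Partrec f) :
    RecursiveIn' O f := by
  induction hf with
  | zero => exact .zero
  | succ => exact .succ
  | left => exact .left
  | right => exact .right
  | pair _ _ ih1 ih2 => exact .pair ih1 ih2
  | comp _ _ ih1 ih2 => exact .comp ih1 ih2
  | prec _ _ ih1 ih2 => exact .prec ih1 ih2
  | rfind _ ih => exact .rfind ih

theorem RecursiveIn'.of_computable {O : ℕ → ℕ} {f : ℕ → ℕ} (hf : Computable f) :
    RecursiveIn' O ↑f :=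
  RecursiveIn'.of_partrec (Partrec.nat_iff.1 hf.partrec)

theorem RecursiveIn'.trans {O g : ℕ → ℕ} {f : ℕ →. ℕ} (hf : RecursiveIn' g f)
    (hg : RecursiveIn' O (fun n => Part.some (g n))) : RecursiveIn' O f := by
  induction hf with
  | oracle => exact hg
  | zero => exact .zero
  | succ => exact .succ
  | left => exact .left
  | right => exact .right
  | pair _ _ ih1 ih2 => exact .pair ih1 ih2
  | comp _ _ ih1 ih2 => exact .comp ih1 ih2
  | prec _ _ ih1 ih2 => exact .prec ih1 ih2
  | rfind _ ih => exact .rfind ih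

/-- history: `histN g n = encode [g (n-1), ..., g 0]`. -/
def histN (g : ℕ → ℕ) : ℕ → ℕ
  | 0 => 0
  | n + 1 => Nat.succ (Nat.pair (g n) (histN g n))

theorem histN_eq (g : ℕ → ℕ) (n : ℕ) :
    histN g n = Encodable.encode (((List.range n).reverse.map g)) := by
  induction n with
  | zero => simp [histN]
  | succ n ih =>
      rw [histN, ih, List.range_succ]
      simp [Encodable.encode_list_cons]

theorem part_some_bind_coe {α : Type} (a : α) (f : α → α) :
    Part.some a >>= (f : α →. α) = Part.some (f a) := Part.bind_some _ _

theorem recursiveIn_histN (g : ℕ → ℕ) : RecursiveIn' g (fun n => Part.some (histN g n)) := by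
  have h1 : RecursiveIn' g (fun m : ℕ => Part.some (g m.unpair.2.unpair.1)) :=
    (RecursiveIn'.oracle.comp (RecursiveIn'.left.comp RecursiveIn'.right)).of_eq (fun n => by
      simp [PFun.coe_val, Part.bind_some, part_some_bind_coe])
  have h2 : RecursiveIn' g (fun m : ℕ => Part.some (m.unpair.2.unpair.2)) :=
    (RecursiveIn'.right.comp RecursiveIn'.right).of_eq (fun n => by
      simp [PFun.coe_val, Part.bind_some, part_some_bind_coe])
  have h3 : RecursiveIn' g (fun m : ℕ =>
      Part.some (Nat.succ (Nat.pair (g m.unpair.2.unpair.1) m.unpair.2.unpair.2))) :=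
    (RecursiveIn'.succ.comp (h1.pair h2)).of_eq (fun n => by
      simp [PFun.coe_val, Part.bind_some, Seq.seq, part_some_bind_coe])
  have hbase : RecursiveIn' g (pure 0) := .zero
  have H := hbase.prec h3
  have hpair : RecursiveIn' g ↑(fun n : ℕ => Nat.pair 0 n) :=
    RecursiveIn'.of_computable (Primrec.to_comp (Primrec₂.natPair.comp (Primrec.const 0) Primrec.id))
  have key : ∀ n : ℕ,
      (n.rec (pure 0 : Part ℕ)
        (fun y IH => IH.bind fun i => Part.some (Nat.pair (g y) i).succ) : Part ℕ)
        = Part.some (histN g n) := by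
    intro n
    induction n with
    | zero => simp [histN, Part.pure_eq_some]
    | succ n ih =>
        show (_ : Part ℕ).bind _ = _
        rw [ih]
        simp [histN, Part.bind_some]
  exact (H.comp hpair).of_eq (fun n => by
    simp only [PFun.coe_val, Part.bind_eq_bind, Part.bind_some, Nat.unpaired, Nat.unpair_pair]
    exact key n)

theorem ComputableIn'.nat_oracle {A : ℕ → ℕ} {g : ℕ → ℕ} (hg : ComputableIn' A g) :
    RecursiveIn' A (fun n => Part.some (g n)) :=
  RecursiveIn'.of_eq hg (fun n => by simp [Encodable.decode, Encodable.encode, Part.bind_some])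

theorem computableIn_of_hist {A g : ℕ → ℕ} (hg : ComputableIn' A g) {F : ℕ → ℕ}
    (hF : Computable F) {k : ℕ} {f : ℕ → Fin (k + 1)}
    (hf : ∀ n, Encodable.encode (f n) = F (histN g (n + 1))) : ComputableIn' A f := by
  have h1 : RecursiveIn' g (fun n => Part.some (histN g (n + 1))) :=
    ((recursiveIn_histN g).comp RecursiveIn'.succ).of_eq (fun n => by
      simp [PFun.coe_val, Part.bind_eq_bind, Part.bind_some, part_some_bind_coe])
  have h2 : RecursiveIn' g (fun n => Part.some (F (histN g (n + 1)))) :=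
    ((RecursiveIn'.of_computable hF).comp h1).of_eq (fun n => by
      simp [PFun.coe_val, Part.bind_eq_bind, Part.bind_some, part_some_bind_coe])
  have h3 : RecursiveIn' A (fun n => Part.some (F (histN g (n + 1)))) :=
    h2.trans hg.nat_oracle
  exact h3.of_eq (fun n => by
    simp [Encodable.decode, Part.bind_some, hf n])

open Nat.Partrec (Code)

/-- `some false`-style check: within `b` steps, machine `e` says `τ` is *not* in the tree. -/
def badChk (e b : ℕ) (m : ℕ) : Bool :=
  decide (Nat.Partrec.Code.evaln b (Denumerable.ofNat Code e) m = some 0)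

def inner (k e b : ℕ) (σ : List (Fin (k + 1))) : Option (Fin (k + 1)) :=
  (List.finRange (k + 1)).find? fun x => badChk e b (Encodable.encode (σ ++ [x]))

def stepPred (k b : ℕ) (s : List (Fin (k + 1)) × List ℕ) (e : ℕ) : Bool :=
  decide (List.idxOf e s.2 = s.2.length) && (inner k e b s.1).isSome

def chosen (k b : ℕ) (s : List (Fin (k + 1)) × List ℕ) : Option ℕ :=
  (List.range s.1.length).find? (stepPred k b s)

def newSym (k b : ℕ) (s : List (Fin (k + 1)) × List ℕ) : Fin (k + 1) :=
  ((chosen k b s).bind fun e => inner k e b s.1).getD 0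

def stepC (k b : ℕ) (s : List (Fin (k + 1)) × List ℕ) : List (Fin (k + 1)) × List ℕ :=
  (s.1 ++ [newSym k b s], ((chosen k b s).map (· :: s.2)).getD s.2)

def buildC (k : ℕ) (l : List ℕ) : List (Fin (k + 1)) × List ℕ :=
  l.foldl (fun s b => stepC k b s) ([], [])

def mainF (k : ℕ) : ℕ → ℕ := fun m =>
  ((Encodable.decode (α := List ℕ) m).map fun l =>
    Encodable.encode (newSym k (l.head?.getD 0) (buildC k l.tail.reverse))).getD 0

theorem List.get?_findIdx_eq_find? {α : Type*} (p : α → Bool) :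
    ∀ l : List α, l[l.findIdx p]? = l.find? p
  | [] => rfl
  | a :: l => by
      rw [List.findIdx_cons]
      cases h : p a
      · simpa [h] using List.get?_findIdx_eq_find? p l
      · simp [h]

theorem Primrec.list_find? {α β : Type*} [Primcodable α] [Primcodable β]
    {f : α → List β} {p : α → β → Bool} (hf : Primrec f) (hp : Primrec₂ p) :
    Primrec fun a => (f a).find? (p a) :=
  (Primrec.list_getElem?.comp hf (Primrec.list_findIdx hf hp)).of_eq fun a =>
    List.get?_findIdx_eq_find? _ _

theorem primrec_badChk : Primrec fun q : (ℕ × ℕ) × ℕ => badChk q.1.1 q.1.2 q.2 := by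
  have h := Nat.Partrec.Code.primrec_evaln
  have h2 : Primrec fun q : (ℕ × ℕ) × ℕ =>
      Nat.Partrec.Code.evaln q.1.2 (Denumerable.ofNat Code q.1.1) q.2 :=
    h.comp (((Primrec.snd.comp .fst).pair
      ((Primrec.ofNat Code).comp (Primrec.fst.comp .fst))).pair .snd)
  exact (Primrec.eq.comp h2 (.const (some 0))).decide

theorem primrec_inner (k : ℕ) :
    Primrec fun q : (ℕ × ℕ) × List (Fin (k + 1)) => inner k q.1.1 q.1.2 q.2 := by
  apply Primrec.list_find? (.const (List.finRange (k + 1)))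
  exact (primrec_badChk.comp ((Primrec.fst.comp .fst).pair
    (Primrec.encode.comp (Primrec.list_concat.comp (Primrec.snd.comp .fst) .snd)))).to₂

theorem primrec_stepPred (k : ℕ) :
    Primrec fun q : (ℕ × (List (Fin (k + 1)) × List ℕ)) × ℕ =>
      stepPred k q.1.1 q.1.2 q.2 := by
  have part1 : Primrec fun q : (ℕ × (List (Fin (k + 1)) × List ℕ)) × ℕ =>
      decide (List.idxOf q.2 q.1.2.2 = q.1.2.2.length) :=
    (Primrec.eq.comp
      (Primrec.list_idxOf.comp .snd (Primrec.snd.comp (Primrec.snd.comp .fst)))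
      (Primrec.list_length.comp (Primrec.snd.comp (Primrec.snd.comp .fst)))).decide
  have part2 : Primrec fun q : (ℕ × (List (Fin (k + 1)) × List ℕ)) × ℕ =>
      (inner k q.2 q.1.1 q.1.2.1).isSome :=
    Primrec.option_isSome.comp ((primrec_inner k).comp
      ((Primrec.snd.pair (Primrec.fst.comp .fst)).pair
        (Primrec.fst.comp (Primrec.snd.comp .fst))))
  exact (Primrec.dom_bool₂ (· && ·)).comp part1 part2

theorem primrec_chosen (k : ℕ) :
    Primrec fun q : ℕ × (List (Fin (k + 1)) × List ℕ) => chosen k q.1 q.2 :=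
  Primrec.list_find?
    (Primrec.list_range.comp (Primrec.list_length.comp (Primrec.fst.comp .snd)))
    (primrec_stepPred k)

theorem primrec_newSym (k : ℕ) :
    Primrec fun q : ℕ × (List (Fin (k + 1)) × List ℕ) => newSym k q.1 q.2 :=
  Primrec.option_getD.comp
    (Primrec.option_bind (primrec_chosen k)
      ((primrec_inner k).comp ((Primrec.snd.pair (Primrec.fst.comp .fst)).pair
        (Primrec.fst.comp (Primrec.snd.comp .fst)))).to₂)
    (.const 0)

theorem primrec_stepC (k : ℕ) :
    Primrec fun q : ℕ × (List (Fin (k + 1)) × List ℕ) => stepC k q.1 q.2 :=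
  (Primrec.list_concat.comp (Primrec.fst.comp .snd) (primrec_newSym k)).pair
    (Primrec.option_getD.comp
      (Primrec.option_map (primrec_chosen k)
        (Primrec.list_cons.comp .snd (Primrec.snd.comp (Primrec.snd.comp .fst))).to₂)
      (Primrec.snd.comp .snd))

theorem primrec_buildC (k : ℕ) : Primrec (buildC k) :=
  Primrec.list_foldl .id (.const ([], []))
    ((primrec_stepC k).comp ((Primrec.snd.comp .snd).pair (Primrec.fst.comp .snd))).to₂

theorem computable_mainF (k : ℕ) : Computable (mainF k) := by
  apply Primrec.to_comp
  apply Primrec.option_getD.comp _ (Primrec.const 0)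
  apply Primrec.option_map Primrec.decode
  exact (Primrec.encode.comp ((primrec_newSym k).comp
    ((Primrec.option_getD.comp (Primrec.list_head?.comp .snd) (.const 0)).pair
      ((primrec_buildC k).comp (Primrec.list_reverse.comp
        (Primrec.list_tail.comp .snd)))))).to₂

def allL (k : ℕ) : ℕ → List (List (Fin (k + 1)))
  | 0 => [[]]
  | m + 1 => (allL k m).flatMap fun τ => (List.finRange (k + 1)).map fun x => τ ++ [x]

theorem mem_allL (k : ℕ) : ∀ (m : ℕ) (τ : List (Fin (k + 1))), τ.length = m → τ ∈ allL k m := by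
  intro m
  induction m with
  | zero => intro τ h; simp [List.length_eq_zero_iff.1 h, allL]
  | succ m ih =>
      intro τ h
      have hne : τ ≠ [] := by intro e; simp [e] at h
      rw [allL, List.mem_flatMap]
      refine ⟨τ.dropLast, ih _ (by simp [h]), ?_⟩
      rw [List.mem_map]
      exact ⟨τ.getLast hne, List.mem_finRange _, List.dropLast_append_getLast hne⟩

theorem primrec_allL (k : ℕ) : Primrec (allL k) := by
  have : Primrec (Nat.rec (motive := fun _ => List (List (Fin (k + 1)))) [[]]
      (fun _ ih => ih.flatMap fun τ => (List.finRange (k + 1)).map fun x => τ ++ [x])) := by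
    apply Primrec.nat_rec₁
    exact (Primrec.list_flatMap Primrec.snd
      (Primrec.list_map (.const (List.finRange (k + 1)))
        (Primrec.list_concat.comp (Primrec.snd.comp .fst) .snd).to₂).to₂).to₂
  exact this.of_eq fun n => by induction n with
    | zero => rfl
    | succ n ihn => simp only [allL, ← ihn]

def domP (k : ℕ) (c : Code) (n s : ℕ) : Bool :=
  !((allL k (n + 1)).find? fun τ =>
      !(Nat.Partrec.Code.evaln s c (Encodable.encode τ)).isSome).isSome

theorem domP_iff {k : ℕ} {c : Code} {n s : ℕ} :
    domP k c n s = true ↔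
      ∀ τ ∈ allL k (n + 1), (Nat.Partrec.Code.evaln s c (Encodable.encode τ)).isSome := by
  simp [domP, Option.isSome_iff_ne_none]

theorem primrec_domP (k : ℕ) (c : Code) : Primrec₂ (domP k c) := by
  have hfind : Primrec fun p : ℕ × ℕ => (allL k (p.1 + 1)).find? fun τ =>
      !(Nat.Partrec.Code.evaln p.2 c (Encodable.encode τ)).isSome := by
    apply Primrec.list_find? ((primrec_allL k).comp (Primrec.succ.comp .fst))
    exact ((Primrec.dom_bool Bool.not).comp (Primrec.option_isSome.comp
      (Nat.Partrec.Code.primrec_evaln.comp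
        (((Primrec.snd.comp .fst).pair (.const c)).pair (Primrec.encode.comp .snd))))).to₂
  exact ((Primrec.dom_bool Bool.not).comp (Primrec.option_isSome.comp hfind)).to₂

theorem computable_nat_find {p : ℕ → ℕ → Bool} (hp : Primrec₂ p)
    (hex : ∀ n, ∃ s, p n s = true) :
    Computable fun n => Nat.find (hex n) := by
  have hpr : Partrec fun n => Nat.rfind fun s => (Part.some (p n s) : Part Bool) :=
    Partrec.rfind (hp.to_comp.partrec₂)
  apply hpr.of_eq_tot
  intro n
  refine Nat.mem_rfind.2 ?_
  constructor
  · simpa [Part.mem_some_iff] using Nat.find_spec (hex n)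
  · intro m hm
    have h1 := Nat.find_min (hex n) hm
    simp only [Part.mem_some_iff]
    exact (Bool.eq_false_iff.2 fun h2 => h1 h2).symm

/-! ### Properties of the construction -/

def SB (k : ℕ) (g : ℕ → ℕ) (n : ℕ) : List (Fin (k + 1)) × List ℕ :=
  buildC k ((List.range n).map g)

theorem SB_zero (k : ℕ) (g : ℕ → ℕ) : SB k g 0 = ([], []) := rfl

theorem SB_succ (k : ℕ) (g : ℕ → ℕ) (n : ℕ) :
    SB k g (n + 1) = stepC k (g n) (SB k g n) := by
  unfold SB buildC
  rw [List.range_succ, List.map_append, List.foldl_append]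
  rfl

theorem stepC_fst (k b : ℕ) (s : List (Fin (k + 1)) × List ℕ) :
    (stepC k b s).1 = s.1 ++ [newSym k b s] := rfl

theorem acted_sub {k b : ℕ} {s : List (Fin (k + 1)) × List ℕ} {e : ℕ}
    (h : e ∈ s.2) : e ∈ (stepC k b s).2 := by
  unfold stepC
  cases hc : chosen k b s <;> simp [hc, h]

theorem acted_mono {k : ℕ} {g : ℕ → ℕ} {e n m : ℕ} (hnm : n ≤ m)
    (h : e ∈ (SB k g n).2) : e ∈ (SB k g m).2 := by
  induction m, hnm using Nat.le_induction with
  | base => exact h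
  | succ m _ ih => rw [SB_succ]; exact acted_sub ih

theorem chosen_spec {k b : ℕ} {s : List (Fin (k + 1)) × List ℕ} {e : ℕ}
    (h : chosen k b s = some e) :
    e ∉ s.2 ∧ (inner k e b s.1).isSome ∧ e < s.1.length := by
  have h1 := List.find?_some h
  have h2 := List.mem_of_find?_eq_some h
  rw [stepPred, Bool.and_eq_true, decide_eq_true_eq] at h1
  exact ⟨List.idxOf_eq_length_iff.1 h1.1, h1.2, List.mem_range.1 h2⟩

theorem chosen_acted {k b : ℕ} {s : List (Fin (k + 1)) × List ℕ} {e : ℕ}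
    (h : chosen k b s = some e) : e ∈ (stepC k b s).2 := by
  unfold stepC; simp [h]

theorem acted_new {k b : ℕ} {s : List (Fin (k + 1)) × List ℕ} {e : ℕ}
    (h : e ∈ (stepC k b s).2) : e ∈ s.2 ∨ chosen k b s = some e := by
  unfold stepC at h
  cases hc : chosen k b s with
  | none => simp [hc] at h; exact Or.inl h
  | some e' =>
      simp [hc] at h
      rcases h with h | h
      · subst h; exact Or.inr rfl
      · exact Or.inl h

theorem chosen_newSym {k b : ℕ} {s : List (Fin (k + 1)) × List ℕ} {e : ℕ}
    (h : chosen k b s = some e) :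
    badChk e b (Encodable.encode (s.1 ++ [newSym k b s])) = true := by
  obtain ⟨-, h2, -⟩ := chosen_spec h
  obtain ⟨x, hx⟩ := Option.isSome_iff_exists.1 h2
  have hns : newSym k b s = x := by unfold newSym; rw [h]; simp [hx]
  rw [hns]
  unfold _root_.inner at hx
  simpa using List.find?_some hx

theorem exists_stage (k : ℕ) (g : ℕ → ℕ) (E : ℕ) :
    ∃ n0, ∀ n, n0 ≤ n → ∀ e < E, chosen k (g n) (SB k g n) ≠ some e := by
  induction E with
  | zero => exact ⟨0, fun n _ e he => absurd he (Nat.not_lt_zero e)⟩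
  | succ E ih =>
      obtain ⟨n0, hn0⟩ := ih
      by_cases hc : ∃ n1, chosen k (g n1) (SB k g n1) = some E
      · obtain ⟨n1, hn1⟩ := hc
        refine ⟨max n0 (n1 + 1), fun n hn e he hch => ?_⟩
        rcases Nat.lt_succ_iff_lt_or_eq.1 he with h | rfl
        · exact hn0 n (le_trans (le_max_left _ _) hn) e h hch
        · have hmem : e ∈ (SB k g n).2 :=
            acted_mono (le_trans (le_max_right _ _) hn)
              (by rw [SB_succ]; exact chosen_acted hn1)
          exact (chosen_spec hch).1 hmem
      · refine ⟨n0, fun n hn e he hch => ?_⟩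
        rcases Nat.lt_succ_iff_lt_or_eq.1 he with h | rfl
        · exact hn0 n hn e h hch
        · exact hc ⟨n, hch⟩

theorem find?_range_min {p : ℕ → Bool} {n e : ℕ} (he : e < n) (hp : p e = true) :
    ∃ e' ≤ e, (List.range n).find? p = some e' := by
  obtain ⟨m, rfl⟩ : ∃ m, n = (e + 1) + m := ⟨n - (e + 1), by omega⟩
  rw [List.range_add, List.find?_append]
  have h1 : ((List.range (e + 1)).find? p).isSome :=
    List.find?_isSome.2 ⟨e, List.mem_range.2 (Nat.lt_succ_self e), hp⟩
  obtain ⟨e', he'⟩ := Option.isSome_iff_exists.1 h1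
  refine ⟨e', ?_, by rw [he']; rfl⟩
  exact Nat.lt_succ_iff.1 (List.mem_range.1 (List.mem_of_find?_eq_some he'))

/-- every hyperimmune degree is `k`-surviving for every `k ≥ 2`. -/
theorem hyperimmune_is_kSurviving (A : ℕ → ℕ)
    (hA : ∃ g : ℕ → ℕ, ComputableIn' A g ∧
      ∀ h : ℕ → ℕ, Computable h → {n : ℕ | h n < g n}.Infinite)
    (k : ℕ) (hk : 2 ≤ k) :
    ∃ f : ℕ → Fin (k + 1), ComputableIn' A f ∧ KSurviving k f := by
  obtain ⟨g, hgA, hgHyp⟩ := hA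
  set f : ℕ → Fin (k + 1) := fun n => newSym k (g n) (SB k g n) with hfdef
  have SBfst : ∀ n, (SB k g n).1 = (List.range n).map f := by
    intro n
    induction n with
    | zero => simp [SB_zero]
    | succ n ih =>
        rw [SB_succ, stepC_fst, ih, List.range_succ, List.map_append]
        rfl
  refine ⟨f, ?_, ?_⟩
  · apply computableIn_of_hist hgA (computable_mainF k)
    intro n
    have hl : histN g (n + 1)
        = Encodable.encode (g n :: ((List.range n).map g).reverse) := by
      rw [histN_eq, List.range_succ]
      simp
    rw [hl, mainF]
    simp only [Encodable.encodek, Option.map_some, Option.getD_some, List.head?_cons,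
      List.tail_cons, List.reverse_reverse]
    rfl
  · intro T hbr hct hpath
    obtain ⟨fB, hfB, hpT⟩ := ComputablePred.computable_iff.1 hct
    obtain ⟨c, hc⟩ := Nat.Partrec.Code.exists_code.1 hfB
    set e := Encodable.encode c with he
    have heval : ∀ τ : List (Fin (k + 1)),
        Nat.Partrec.Code.eval c (Encodable.encode τ)
          = Part.some (Encodable.encode (fB τ)) := by
      intro τ
      rw [hc]
      simp [Encodable.encodek]
    have hmemT : ∀ τ : List (Fin (k + 1)), τ ∈ T ↔ fB τ = true := fun τ =>
      iff_of_eq (congrFun hpT τ)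
    have hsound : ∀ b (τ : List (Fin (k + 1))),
        badChk e b (Encodable.encode τ) = true → τ ∉ T := by
      intro b τ hb
      rw [badChk, he, Denumerable.ofNat_encode, decide_eq_true_eq] at hb
      have h0 : (0 : ℕ) ∈ Nat.Partrec.Code.eval c (Encodable.encode τ) :=
        Nat.Partrec.Code.evaln_sound (Option.mem_def.2 hb)
      rw [heval τ, Part.mem_some_iff] at h0
      intro hT
      rw [(hmemT τ).1 hT] at h0
      exact absurd h0.symm one_ne_zero
    have hcomplete : ∀ b (τ : List (Fin (k + 1))), τ ∉ T →
        (Nat.Partrec.Code.evaln b c (Encodable.encode τ)).isSome →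
        badChk e b (Encodable.encode τ) = true := by
      intro b τ hτ hs
      obtain ⟨w, hw⟩ := Option.isSome_iff_exists.1 hs
      have hwe : w ∈ Nat.Partrec.Code.eval c (Encodable.encode τ) :=
        Nat.Partrec.Code.evaln_sound (Option.mem_def.2 hw)
      rw [heval τ, Part.mem_some_iff] at hwe
      have hfτ : fB τ = false := by
        cases hfb : fB τ
        · rfl
        · exact absurd ((hmemT τ).2 hfb) hτ
      rw [badChk, he, Denumerable.ofNat_encode, decide_eq_true_eq, hw, hwe, hfτ]
      rfl
    have hex : ∀ n, ∃ s, domP k c n s = true := by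
      intro n
      have haux : ∀ l : List (List (Fin (k + 1))), ∃ s, ∀ τ ∈ l,
          (Nat.Partrec.Code.evaln s c (Encodable.encode τ)).isSome := by
        intro l
        induction l with
        | nil => exact ⟨0, by simp⟩
        | cons τ l ih =>
            obtain ⟨s1, hs1⟩ := ih
            have hev : Encodable.encode (fB τ)
                ∈ Nat.Partrec.Code.eval c (Encodable.encode τ) := by
              rw [heval]
              exact Part.mem_some _
            obtain ⟨s2, hs2⟩ := Nat.Partrec.Code.evaln_complete.1 hev
            refine ⟨max s1 s2, fun τ' hτ' => ?_⟩
            rcases List.mem_cons.1 hτ' with rfl | hmem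
            · exact Option.isSome_iff_exists.2
                ⟨_, Option.mem_def.1 (Nat.Partrec.Code.evaln_mono (le_max_right _ _) hs2)⟩
            · obtain ⟨w, hw⟩ := Option.isSome_iff_exists.1 (hs1 τ' hmem)
              exact Option.isSome_iff_exists.2
                ⟨w, Option.mem_def.1 (Nat.Partrec.Code.evaln_mono (le_max_left _ _)
                  (Option.mem_def.2 hw))⟩
      obtain ⟨s, hs⟩ := haux (allL k (n + 1))
      exact ⟨s, domP_iff.2 hs⟩
    have hcomph : Computable fun n => Nat.find (hex n) :=
      computable_nat_find (primrec_domP k c) hex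
    have hinf := hgHyp _ hcomph
    have hpathn : ∀ n, (SB k g n).1 ∈ T := fun n => by
      rw [SBfst]
      exact hpath n
    have hnact : ∀ n, chosen k (g n) (SB k g n) ≠ some e := by
      intro n hch
      have hbad := chosen_newSym hch
      have hout : (SB k g n).1 ++ [newSym k (g n) (SB k g n)] ∉ T := hsound _ _ hbad
      apply hout
      have hin := hpathn (n + 1)
      rw [SB_succ, stepC_fst] at hin
      exact hin
    have hnever : ∀ n, e ∉ (SB k g n).2 := by
      intro n
      induction n with
      | zero => simp [SB_zero]
      | succ n ih =>
          rw [SB_succ]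
          intro hmem
          rcases acted_new hmem with hmm | hmm
          · exact ih hmm
          · exact hnact n hmm
    obtain ⟨n0, hn0⟩ := exists_stage k g e
    obtain ⟨n, hnset, hnge⟩ : ∃ n, Nat.find (hex n) < g n ∧ max n0 (e + 1) ≤ n := by
      obtain ⟨n, hn1, hn2⟩ := hinf.exists_gt (max n0 (e + 1))
      exact ⟨n, hn1, le_of_lt hn2⟩
    have hσT : (SB k g n).1 ∈ T := hpathn n
    have hσlen : (SB k g n).1.length = n := by
      rw [SBfst]
      simp
    have hncard : (succSet T (SB k g n).1).ncard ≤ k := by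
      rcases hbr.2 _ hσT with h1 | h1 <;> omega
    obtain ⟨x, hx⟩ : ∃ x : Fin (k + 1), (SB k g n).1 ++ [x] ∉ T := by
      by_contra hall
      push_neg at hall
      have huniv : succSet T (SB k g n).1 = Set.univ := Set.eq_univ_of_forall hall
      rw [huniv, Set.ncard_univ, Nat.card_eq_fintype_card, Fintype.card_fin] at hncard
      omega
    have hiso : (Nat.Partrec.Code.evaln (g n) c
        (Encodable.encode ((SB k g n).1 ++ [x]))).isSome := by
      have hmem : (SB k g n).1 ++ [x] ∈ allL k (n + 1) :=
        mem_allL k (n + 1) _ (by simp [hσlen])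
      have h1 := domP_iff.1 (Nat.find_spec (hex n)) _ hmem
      obtain ⟨w, hw⟩ := Option.isSome_iff_exists.1 h1
      exact Option.isSome_iff_exists.2
        ⟨w, Option.mem_def.1 (Nat.Partrec.Code.evaln_mono (le_of_lt hnset)
          (Option.mem_def.2 hw))⟩
    have hbad : badChk e (g n) (Encodable.encode ((SB k g n).1 ++ [x])) = true :=
      hcomplete _ _ hx hiso
    have hpred : stepPred k (g n) (SB k g n) e = true := by
      rw [stepPred, Bool.and_eq_true, decide_eq_true_eq]
      refine ⟨List.idxOf_eq_length_iff.2 (hnever n), ?_⟩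
      unfold _root_.inner
      exact List.find?_isSome.2 ⟨x, List.mem_finRange x, hbad⟩
    have hlt : e < (SB k g n).1.length := by
      rw [hσlen]
      omega
    obtain ⟨e', he'le, he'⟩ := find?_range_min hlt hpred
    have hch : chosen k (g n) (SB k g n) = some e' := he'
    rcases lt_or_eq_of_le he'le with hlt' | rfl
    · exact hn0 n (le_trans (le_max_left _ _) hnge) e' hlt' hch
    · exact hnact n hch
end
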